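/- Let g : [0,∞) → ℝ be measurable, bounded, and nonnegative, and suppose |g(t)| ≤ C e^{-δ t} for all t ≥ 0 with constants C, δ > 0. Then for all T > 0, |(2/T) ∫₀ᵀ ∫₀^{T−t₁} g(t) dt dt₁ − 2∫₀^∞ g(t) dt| ≤ 4C/(δ² T). -/

import Mathlib

open MeasureTheory Set intervalIntegral

theorem stmt_3 (g : ℝ → ℝ) (C δ : ℝ) (hC : 0 < C) (hδ : 0 < δ)
    (hmeas : Measurable g) (hbdd : ∃ B : ℝ, ∀ t : ℝ, |g t| ≤ B)
    (hnonneg : ∀ t : ℝ, 0 ≤ t → 0 ≤ g t)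
    (hdecay : ∀ t : ℝ, 0 ≤ t → |g t| ≤ C * Real.exp (-δ * t))
    (T : ℝ) (hT : 0 < T) :
    |(2 / T) * (∫ t₁ in (0:ℝ)..T, ∫ t in (0:ℝ)..(T - t₁), g t) -
        2 * ∫ t in Set.Ioi (0:ℝ), g t| ≤ 4 * C / (δ ^ 2 * T) := by
  obtain ⟨B, hB⟩ := hbdd
  -- g is interval integrable everywhere
  have hloc : ∀ a b : ℝ, IntervalIntegrable g volume a b := by
    intro a b
    rw [intervalIntegrable_iff]
    refine ((integrableOn_const_iff (C := B)).2 (Or.inr ?_)).mono' hmeas.aestronglyMeasurable.restrict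
      (ae_of_all _ fun t => hB t)
    exact measure_Ioc_lt_top
  -- integrability of exp decay on Ioi s
  have hexpInt : ∀ s : ℝ, IntegrableOn (fun t => Real.exp (-δ * t)) (Ioi s) := by
    intro s
    simpa using exp_neg_integrableOn_Ioi s hδ
  -- g integrable on Ioi s for s ≥ 0
  have hIg : ∀ s : ℝ, 0 ≤ s → IntegrableOn g (Ioi s) := by
    intro s hs
    refine ((hexpInt s).const_mul C).mono' hmeas.aestronglyMeasurable.restrict ?_
    filter_upwards [ae_restrict_mem measurableSet_Ioi] with t ht
    have : (0:ℝ) ≤ t := le_of_lt (lt_of_le_of_lt hs ht)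
    calc ‖g t‖ = |g t| := rfl
      _ ≤ C * Real.exp (-δ * t) := hdecay t this
  -- exponential integral formula
  have hexp : ∀ s : ℝ, (∫ t in Ioi s, Real.exp (-δ * t)) = δ⁻¹ * Real.exp (-δ * s) := by
    intro s
    have h1 : (∫ t in Ioi s, Real.exp (-δ * t))
        = ∫ t in Ioi s, (fun x => Real.exp (-x)) (δ * t) := by
      congr 1; ext t; simp [neg_mul]
    rw [h1, MeasureTheory.integral_comp_mul_left_Ioi (fun x => Real.exp (-x)) s hδ,
      integral_exp_neg_Ioi, smul_eq_mul, neg_mul]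
  set I : ℝ := ∫ t in Set.Ioi (0:ℝ), g t with hI
  set G : ℝ → ℝ := fun s => ∫ t in (0:ℝ)..s, g t with hG
  have hGcont : Continuous G := intervalIntegral.continuous_primitive hloc 0
  -- key identity and bounds for the tail
  have hkey : ∀ s : ℝ, 0 ≤ s → I - G s = ∫ t in Ioi s, g t := by
    intro s hs
    have hsplit : (Ioc (0:ℝ) s) ∪ Ioi s = Ioi 0 := Ioc_union_Ioi_eq_Ioi hs
    have : I = (∫ t in Ioc (0:ℝ) s, g t) + ∫ t in Ioi s, g t := by
      rw [hI, ← hsplit, setIntegral_union (Ioc_disjoint_Ioi le_rfl) measurableSet_Ioi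
        ((hIg 0 le_rfl).mono_set Ioc_subset_Ioi_self) (hIg s hs)]
    rw [this, hG]
    simp [intervalIntegral.integral_of_le hs]
  have htail_nonneg : ∀ s : ℝ, 0 ≤ s → 0 ≤ I - G s := by
    intro s hs
    rw [hkey s hs]
    refine setIntegral_nonneg measurableSet_Ioi fun t ht => hnonneg t ?_
    exact le_of_lt (lt_of_le_of_lt hs ht)
  have htail_le : ∀ s : ℝ, 0 ≤ s → I - G s ≤ C * δ⁻¹ * Real.exp (-δ * s) := by
    intro s hs
    rw [hkey s hs]
    calc (∫ t in Ioi s, g t) ≤ ∫ t in Ioi s, C * Real.exp (-δ * t) := by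
          refine setIntegral_mono_on (hIg s hs) ((hexpInt s).const_mul C)
            measurableSet_Ioi fun t ht => ?_
          exact le_trans (le_abs_self _) (hdecay t (le_of_lt (lt_of_le_of_lt hs ht)))
      _ = C * (δ⁻¹ * Real.exp (-δ * s)) := by
          rw [MeasureTheory.integral_const_mul, hexp s]
      _ = C * δ⁻¹ * Real.exp (-δ * s) := by ring
  -- rewrite the double integral
  have hinner : ∀ t₁ : ℝ, (∫ t in (0:ℝ)..(T - t₁), g t) = G (T - t₁) := fun _ => rfl
  have hrefl : (∫ t₁ in (0:ℝ)..T, G (T - t₁)) = ∫ s in (0:ℝ)..T, G s := by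
    rw [intervalIntegral.integral_comp_sub_left G T]
    simp
  have hGint : IntervalIntegrable G volume 0 T := hGcont.intervalIntegrable 0 T
  set D : ℝ := ∫ s in (0:ℝ)..T, (I - G s) with hD
  have hDval : D = T * I - ∫ s in (0:ℝ)..T, G s := by
    rw [hD, intervalIntegral.integral_sub (intervalIntegrable_const) hGint]
    simp [mul_comm]
  have hDnonneg : 0 ≤ D := by
    refine intervalIntegral.integral_nonneg hT.le fun s hs => htail_nonneg s hs.1
  have hDle : D ≤ C / δ ^ 2 := by
    have h1 : D ≤ ∫ s in (0:ℝ)..T, C * δ⁻¹ * Real.exp (-δ * s) := by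
      refine intervalIntegral.integral_mono_on hT.le
        (intervalIntegrable_const.sub hGint)
        ((Continuous.intervalIntegrable (by fun_prop) 0 T :
          IntervalIntegrable (fun s => C * δ⁻¹ * Real.exp (-δ * s)) volume 0 T))
        fun s hs => htail_le s hs.1
    have h2 : (∫ s in (0:ℝ)..T, C * δ⁻¹ * Real.exp (-δ * s))
        ≤ C * δ⁻¹ * δ⁻¹ := by
      rw [intervalIntegral.integral_const_mul]
      have h3 : (∫ s in (0:ℝ)..T, Real.exp (-δ * s)) ≤ ∫ s in Ioi (0:ℝ), Real.exp (-δ * s) := by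
        rw [intervalIntegral.integral_of_le hT.le]
        refine setIntegral_mono_set (hexpInt 0) (ae_of_all _ fun t => (Real.exp_pos _).le)
          (HasSubset.Subset.eventuallyLE Ioc_subset_Ioi_self)
        -- ae subset
      calc C * δ⁻¹ * ∫ s in (0:ℝ)..T, Real.exp (-δ * s)
          ≤ C * δ⁻¹ * ∫ s in Ioi (0:ℝ), Real.exp (-δ * s) := by
            apply mul_le_mul_of_nonneg_left h3
            positivity
        _ = C * δ⁻¹ * δ⁻¹ := by rw [hexp 0]; simp
    calc D ≤ C * δ⁻¹ * δ⁻¹ := h1.trans h2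
      _ = C / δ ^ 2 := by rw [pow_two, mul_assoc, ← mul_inv, div_eq_mul_inv]
  -- assemble
  have hmain : (2 / T) * (∫ t₁ in (0:ℝ)..T, ∫ t in (0:ℝ)..(T - t₁), g t) - 2 * I
      = -(2 / T) * D := by
    have : (∫ t₁ in (0:ℝ)..T, ∫ t in (0:ℝ)..(T - t₁), g t) = ∫ s in (0:ℝ)..T, G s := by
      simp_rw [hinner]; exact hrefl
    rw [this]
    have hGval : (∫ s in (0:ℝ)..T, G s) = T * I - D := by rw [hDval]; ring
    rw [hGval]
    field_simp
    ring
  have habs : |(-(2 / T)) * D| = (2 / T) * D := by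
    rw [abs_mul, abs_neg, abs_of_nonneg (by positivity : (0:ℝ) ≤ 2 / T),
      abs_of_nonneg hDnonneg]
  rw [hmain, habs]
  calc (2 / T) * D ≤ (2 / T) * (C / δ ^ 2) :=
        mul_le_mul_of_nonneg_left hDle (by positivity)
    _ = 2 * C / (δ ^ 2 * T) := by field_simp
    _ ≤ 4 * C / (δ ^ 2 * T) := by gcongr <;> nlinarith
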